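/- Let ξ ~ Poisson(λ) with λ > 0 and let ξ̃ = (ξ - λ)/√λ. Then for every even integer 2s ≥ 2, E[ξ̃^{2s} (ξ - λ)²] ≤ 4s(λ + 2s) E[ξ̃^{2s}]. -/

import Mathlib

open Real

private lemma sign_pair (a b : ℝ) {i j : ℕ} (h : Even (i + j)) :
    0 ≤ (a ^ i - b ^ i) * (a ^ j - b ^ j) := by
  rcases Nat.even_or_odd i with hi | hi
  · have hj : Even j := (Nat.even_add.mp h).mp hi
    rcases le_total |a| |b| with hab | hab
    · have h1 : a ^ i ≤ b ^ i := by
        rw [← hi.pow_abs a, ← hi.pow_abs b]; exact pow_le_pow_left₀ (abs_nonneg a) hab i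
      have h2 : a ^ j ≤ b ^ j := by
        rw [← hj.pow_abs a, ← hj.pow_abs b]; exact pow_le_pow_left₀ (abs_nonneg a) hab j
      nlinarith
    · have h1 : b ^ i ≤ a ^ i := by
        rw [← hi.pow_abs a, ← hi.pow_abs b]; exact pow_le_pow_left₀ (abs_nonneg b) hab i
      have h2 : b ^ j ≤ a ^ j := by
        rw [← hj.pow_abs a, ← hj.pow_abs b]; exact pow_le_pow_left₀ (abs_nonneg b) hab j
      nlinarith
  · have hj : Odd j := by
      rcases Nat.even_or_odd j with h' | h'
      · exact absurd ((Nat.even_add.mp h).mpr h') (Nat.not_even_iff_odd.mpr hi)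
      · exact h'
    rcases le_total a b with hab | hab
    · have h1 : a ^ i ≤ b ^ i := (Odd.strictMono_pow (R := ℝ) hi).monotone hab
      have h2 : a ^ j ≤ b ^ j := (Odd.strictMono_pow (R := ℝ) hj).monotone hab
      nlinarith
    · have h1 : b ^ i ≤ a ^ i := (Odd.strictMono_pow (R := ℝ) hi).monotone hab
      have h2 : b ^ j ≤ a ^ j := (Odd.strictMono_pow (R := ℝ) hj).monotone hab
      nlinarith

private lemma pair_bound (a b : ℝ) {n i : ℕ} (hn : Even n) (hi : i ≤ n) :
    b ^ i * a ^ (n - i) + b ^ (n - i) * a ^ i ≤ a ^ n + b ^ n := by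
  have h : Even (i + (n - i)) := by rwa [Nat.add_sub_cancel' hi]
  have key := sign_pair a b h
  have ha : a ^ i * a ^ (n - i) = a ^ n := by rw [← pow_add, Nat.add_sub_cancel' hi]
  have hb : b ^ i * b ^ (n - i) = b ^ n := by rw [← pow_add, Nat.add_sub_cancel' hi]
  nlinarith [key, ha, hb]

private lemma sum_bound (a b : ℝ) (n : ℕ) (hn : Even n) :
    ∑ i ∈ Finset.range (n + 1), b ^ i * a ^ (n - i) ≤ (n + 1 : ℝ) * (a ^ n + b ^ n) / 2 := by
  have hrev : ∑ i ∈ Finset.range (n + 1), b ^ i * a ^ (n - i)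
      = ∑ i ∈ Finset.range (n + 1), b ^ (n - i) * a ^ i := by
    rw [← Finset.sum_range_reflect]
    apply Finset.sum_congr rfl
    intro i hi
    have hi' : i ≤ n := Nat.lt_succ_iff.mp (Finset.mem_range.mp hi)
    simp only [Nat.add_sub_cancel]
    rw [Nat.sub_sub_self hi']
  have h2 : 2 * (∑ i ∈ Finset.range (n + 1), b ^ i * a ^ (n - i))
      ≤ (n + 1 : ℝ) * (a ^ n + b ^ n) := by
    have heq : 2 * (∑ i ∈ Finset.range (n + 1), b ^ i * a ^ (n - i))
        = ∑ i ∈ Finset.range (n + 1), (b ^ i * a ^ (n - i) + b ^ (n - i) * a ^ i) := by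
      rw [Finset.sum_add_distrib, ← hrev]; ring
    rw [heq]
    calc ∑ i ∈ Finset.range (n + 1), (b ^ i * a ^ (n - i) + b ^ (n - i) * a ^ i)
        ≤ ∑ _i ∈ Finset.range (n + 1), (a ^ n + b ^ n) := by
          apply Finset.sum_le_sum
          intro i hi
          exact pair_bound a b hn (Nat.lt_succ_iff.mp (Finset.mem_range.mp hi))
      _ = (n + 1 : ℝ) * (a ^ n + b ^ n) := by
          rw [Finset.sum_const, Finset.card_range]; push_cast; ring
  linarith

private lemma diff_pow_le (x : ℝ) (n : ℕ) (hn : Even n) :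
    (x + 1) ^ (n + 1) - x ^ (n + 1) ≤ (n + 1 : ℝ) * (x ^ n + (x + 1) ^ n) / 2 := by
  have h := geom_sum₂_mul (x + 1) x (n + 1)
  have h1 : (x + 1) - x = 1 := by ring
  rw [h1, mul_one] at h
  rw [← h]
  have h2 : ∀ i ∈ Finset.range (n + 1), (x + 1) ^ i * x ^ (n + 1 - 1 - i)
      = (x + 1) ^ i * x ^ (n - i) := by
    intro i _; norm_num
  rw [Finset.sum_congr rfl h2]
  exact sum_bound x (x + 1) n hn

private lemma summable_aux (lam : ℝ) (hlam : 0 ≤ lam) (m : ℕ) :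
    Summable (fun k : ℕ => lam ^ k / (Nat.factorial k : ℝ) * (k : ℝ) ^ m) := by
  apply Summable.of_nonneg_of_le (fun k => by positivity) (fun k => ?_)
    ((Real.summable_pow_div_factorial (Real.exp 1 * lam)).mul_left (Nat.factorial m : ℝ))
  have h1 : ((k : ℝ)) ^ m ≤ (Nat.factorial m : ℝ) * Real.exp 1 ^ k := by
    have h2 := Real.pow_div_factorial_le_exp (x := (k : ℝ)) (Nat.cast_nonneg k) m
    rw [div_le_iff₀ (by positivity)] at h2
    rw [Real.exp_one_pow]
    calc ((k : ℝ)) ^ m ≤ Real.exp k * m.factorial := h2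
      _ = (m.factorial : ℝ) * Real.exp k := by ring
  calc lam ^ k / (Nat.factorial k : ℝ) * (k : ℝ) ^ m
      ≤ lam ^ k / (Nat.factorial k : ℝ) * ((Nat.factorial m : ℝ) * Real.exp 1 ^ k) := by
        apply mul_le_mul_of_nonneg_left h1 (by positivity)
    _ = (Nat.factorial m : ℝ) * ((Real.exp 1 * lam) ^ k / (Nat.factorial k : ℝ)) := by
        rw [mul_pow]; ring

private lemma summable_master (lam : ℝ) (hlam : 0 < lam) (m : ℕ) (f : ℕ → ℝ)
    (hf : ∀ k : ℕ, |f k| ≤ ((k : ℝ) + lam + 1) ^ m) :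
    Summable (fun k : ℕ => Real.exp (-lam) * lam ^ k / (Nat.factorial k : ℝ) * f k) := by
  have hg : Summable (fun k : ℕ =>
      lam ^ k / (Nat.factorial k : ℝ) * ((k : ℝ) + lam + 1) ^ m) := by
    have heq : ∀ k : ℕ, lam ^ k / (Nat.factorial k : ℝ) * ((k : ℝ) + lam + 1) ^ m
        = ∑ j ∈ Finset.range (m + 1),
            (lam ^ k / (Nat.factorial k : ℝ) * (k : ℝ) ^ j)
              * ((lam + 1) ^ (m - j) * (Nat.choose m j : ℝ)) := by
      intro k
      have h3 : ((k : ℝ) + lam + 1) ^ m = ((k : ℝ) + (lam + 1)) ^ m := by ring_nf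
      rw [h3, add_pow, Finset.mul_sum]
      apply Finset.sum_congr rfl
      intro j _
      ring
    apply Summable.congr _ (fun k => (heq k).symm)
    exact summable_sum fun j _ => (summable_aux lam hlam.le j).mul_right _
  apply Summable.of_norm_bounded (hg.mul_left (Real.exp (-lam)))
  intro k
  rw [Real.norm_eq_abs, abs_mul,
    abs_of_nonneg (show (0:ℝ) ≤ Real.exp (-lam) * lam ^ k / (Nat.factorial k : ℝ) by positivity)]
  calc Real.exp (-lam) * lam ^ k / (Nat.factorial k : ℝ) * |f k|
      ≤ Real.exp (-lam) * lam ^ k / (Nat.factorial k : ℝ) * ((k : ℝ) + lam + 1) ^ m := by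
        apply mul_le_mul_of_nonneg_left (hf k) (by positivity)
    _ = Real.exp (-lam) * (lam ^ k / (Nat.factorial k : ℝ) * ((k : ℝ) + lam + 1) ^ m) := by
        ring

private lemma stein (lam : ℝ) (hlam : 0 < lam) (g : ℕ → ℝ)
    (h : Summable fun k : ℕ => Real.exp (-lam) * lam ^ k / (Nat.factorial k : ℝ) * g (k + 1)) :
    ∑' k : ℕ, Real.exp (-lam) * lam ^ k / (Nat.factorial k : ℝ) * ((k : ℝ) * g k)
      = lam * ∑' k : ℕ, Real.exp (-lam) * lam ^ k / (Nat.factorial k : ℝ) * g (k + 1) := by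
  set p : ℕ → ℝ := fun k => Real.exp (-lam) * lam ^ k / (Nat.factorial k : ℝ) with hp
  have hshift : ∀ k : ℕ, p (k + 1) * ((((k : ℕ) + 1 : ℕ) : ℝ) * g (k + 1))
      = lam * (p k * g (k + 1)) := by
    intro k
    have h0 : (Nat.factorial k : ℝ) ≠ 0 := Nat.cast_ne_zero.mpr k.factorial_ne_zero
    have hk : (Nat.factorial (k + 1) : ℝ) = ((k : ℝ) + 1) * (Nat.factorial k : ℝ) := by
      rw [Nat.factorial_succ]; push_cast; ring
    simp only [hp]
    rw [hk, pow_succ]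
    push_cast
    field_simp
  have hsum : Summable (fun k : ℕ => p k * ((k : ℝ) * g k)) := by
    rw [← summable_nat_add_iff 1]
    apply Summable.congr (h.mul_left lam)
    intro k
    push_cast
    rw [← hshift k]
    push_cast
    ring
  rw [Summable.tsum_eq_zero_add hsum]
  simp only [Nat.cast_zero, zero_mul, mul_zero, zero_add]
  rw [← tsum_mul_left]
  apply tsum_congr
  intro k
  rw [show (Real.exp (-lam) * lam ^ k / (Nat.factorial k : ℝ)) = p k from rfl]
  exact_mod_cast hshift k

set_option maxHeartbeats 1000000 in
private lemma abstract_bound (lam : ℝ) (hlam : 0 < lam) (s : ℕ) (hs : 1 ≤ s)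
    (E : ℕ → ℝ) (hEnn : ∀ k, 0 ≤ E k)
    (hS2s : Summable (fun k : ℕ => E k * ((k : ℝ) - lam) ^ (2 * s)))
    (hS2s1 : Summable (fun k : ℕ => E k * ((k : ℝ) - lam) ^ (2 * s + 1)))
    (hS2s2 : Summable (fun k : ℕ => E k * ((k : ℝ) - lam) ^ (2 * s + 2)))
    (hT2s : Summable (fun k : ℕ => E k * ((k : ℝ) - lam + 1) ^ (2 * s)))
    (hT2s1 : Summable (fun k : ℕ => E k * ((k : ℝ) - lam + 1) ^ (2 * s + 1)))
    (hK1 : Summable (fun k : ℕ => E k * ((k : ℝ) * ((k : ℝ) - lam) ^ (2 * s + 1))))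
    (stein1 : ∑' k : ℕ, E k * ((k : ℝ) * ((k : ℝ) - lam) ^ (2 * s + 1))
      = lam * ∑' k : ℕ, E k * ((k : ℝ) - lam + 1) ^ (2 * s + 1))
    (stein2 : ∑' k : ℕ, E k * ((k : ℝ) * ((k : ℝ) - lam) ^ (2 * s))
      = lam * ∑' k : ℕ, E k * ((k : ℝ) - lam + 1) ^ (2 * s)) :
    ∑' k : ℕ, E k * ((k : ℝ) - lam) ^ (2 * s + 2)
      ≤ 4 * (s : ℝ) * (lam + 2 * (s : ℝ)) * ∑' k : ℕ, E k * ((k : ℝ) - lam) ^ (2 * s) := by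
  set M2 := ∑' k : ℕ, E k * ((k : ℝ) - lam) ^ (2 * s) with hM2
  set M3 := ∑' k : ℕ, E k * ((k : ℝ) - lam) ^ (2 * s + 1) with hM3
  set M4 := ∑' k : ℕ, E k * ((k : ℝ) - lam) ^ (2 * s + 2) with hM4
  set T := ∑' k : ℕ, E k * ((k : ℝ) - lam + 1) ^ (2 * s) with hT
  set A := ∑' k : ℕ, E k * ((k : ℝ) - lam + 1) ^ (2 * s + 1) with hA
  have hM2nn : 0 ≤ M2 := by
    rw [hM2]
    apply tsum_nonneg
    intro k
    apply mul_nonneg (hEnn k)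
    rw [pow_mul]
    positivity
  have hID1 : M4 = lam * A - lam * M3 := by
    rw [hM4]
    calc ∑' k : ℕ, E k * ((k : ℝ) - lam) ^ (2 * s + 2)
        = ∑' k : ℕ, (E k * ((k : ℝ) * ((k : ℝ) - lam) ^ (2 * s + 1))
            - lam * (E k * ((k : ℝ) - lam) ^ (2 * s + 1))) := by
          apply tsum_congr; intro k; ring
      _ = (∑' k : ℕ, E k * ((k : ℝ) * ((k : ℝ) - lam) ^ (2 * s + 1)))
            - ∑' k : ℕ, lam * (E k * ((k : ℝ) - lam) ^ (2 * s + 1)) :=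
          Summable.tsum_sub hK1 (hS2s1.mul_left lam)
      _ = lam * A - lam * M3 := by rw [stein1, tsum_mul_left]
  have hID2 : lam * T = M3 + lam * M2 := by
    rw [← stein2]
    calc ∑' k : ℕ, E k * ((k : ℝ) * ((k : ℝ) - lam) ^ (2 * s))
        = ∑' k : ℕ, (E k * ((k : ℝ) - lam) ^ (2 * s + 1)
            + lam * (E k * ((k : ℝ) - lam) ^ (2 * s))) := by
          apply tsum_congr; intro k; ring
      _ = M3 + ∑' k : ℕ, lam * (E k * ((k : ℝ) - lam) ^ (2 * s)) :=
          Summable.tsum_add hS2s1 (hS2s.mul_left lam)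
      _ = M3 + lam * M2 := by rw [tsum_mul_left]
  have hIN1 : A ≤ M3 + (2 * (s : ℝ) + 1) / 2 * (M2 + T) := by
    have hstep : A ≤ ∑' k : ℕ, (E k * ((k : ℝ) - lam) ^ (2 * s + 1)
        + (2 * (s : ℝ) + 1) / 2 * (E k * ((k : ℝ) - lam) ^ (2 * s)
            + E k * ((k : ℝ) - lam + 1) ^ (2 * s))) := by
      rw [hA]
      apply Summable.tsum_le_tsum _ hT2s1 (hS2s1.add ((hS2s.add hT2s).mul_left _))
      intro k
      have hE := hEnn k
      have h := diff_pow_le ((k : ℝ) - lam) (2 * s) (even_two_mul s)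
      push_cast at h
      nlinarith [mul_le_mul_of_nonneg_left h hE]
    calc A ≤ _ := hstep
      _ = M3 + (2 * (s : ℝ) + 1) / 2 * (M2 + T) := by
          rw [Summable.tsum_add hS2s1 ((hS2s.add hT2s).mul_left _), tsum_mul_left,
            Summable.tsum_add hS2s hT2s]
  have hIN2 : 2 * (2 * (s : ℝ) + 1) * M3 ≤ M4 + (2 * (s : ℝ) + 1) ^ 2 * M2 := by
    have hstep : ∑' k : ℕ, 2 * (2 * (s : ℝ) + 1) * (E k * ((k : ℝ) - lam) ^ (2 * s + 1))
        ≤ ∑' k : ℕ, (E k * ((k : ℝ) - lam) ^ (2 * s + 2)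
            + (2 * (s : ℝ) + 1) ^ 2 * (E k * ((k : ℝ) - lam) ^ (2 * s))) := by
      apply Summable.tsum_le_tsum _ (hS2s1.mul_left _) (hS2s2.add (hS2s.mul_left _))
      intro k
      have hE := hEnn k
      have h0 : (0 : ℝ) ≤ ((k : ℝ) - lam) ^ (2 * s) := by rw [pow_mul]; positivity
      have key : 0 ≤ E k * (((k : ℝ) - lam) ^ (2 * s)
          * (((k : ℝ) - lam) - (2 * (s : ℝ) + 1)) ^ 2) :=
        mul_nonneg hE (mul_nonneg h0 (sq_nonneg _))
      have hp1 : ((k : ℝ) - lam) ^ (2 * s + 1) = ((k : ℝ) - lam) ^ (2 * s) * ((k : ℝ) - lam) :=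
        pow_succ _ _
      have hp2 : ((k : ℝ) - lam) ^ (2 * s + 2)
          = ((k : ℝ) - lam) ^ (2 * s) * ((k : ℝ) - lam) ^ 2 := by rw [pow_add]
      rw [hp1, hp2]
      nlinarith [key]
    rw [tsum_mul_left, Summable.tsum_add hS2s2 (hS2s.mul_left _), tsum_mul_left] at hstep
    exact hstep
  have hs' : (1 : ℝ) ≤ (s : ℝ) := by exact_mod_cast hs
  have h2' : lam * A ≤ lam * (M3 + (2 * (s : ℝ) + 1) / 2 * (M2 + T)) :=
    mul_le_mul_of_nonneg_left hIN1 hlam.le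
  have hID2' : (2 * (s : ℝ) + 1) / 2 * (lam * T)
      = (2 * (s : ℝ) + 1) / 2 * (M3 + lam * M2) := by rw [hID2]
  have key : M4 ≤ (2 * (s : ℝ) + 1) * lam * M2 + (2 * (s : ℝ) + 1) / 2 * M3 := by
    nlinarith [h2', hID1, hID2']
  have key2 : 3 * M4 ≤ (4 * (2 * (s : ℝ) + 1) * lam + (2 * (s : ℝ) + 1) ^ 2) * M2 := by
    nlinarith [key, hIN2]
  have hprod1 : 0 ≤ ((s : ℝ) - 1) * lam * M2 :=
    mul_nonneg (mul_nonneg (by linarith) hlam.le) hM2nn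
  have hprod2 : 0 ≤ ((s : ℝ) - 1) * M2 := mul_nonneg (by linarith) hM2nn
  have hprod3 : 0 ≤ ((s : ℝ) - 1) * (s : ℝ) * M2 :=
    mul_nonneg (mul_nonneg (by linarith) (by linarith)) hM2nn
  nlinarith [key2, hprod1, hprod2, hprod3, hM2nn]

set_option maxHeartbeats 1000000 in
private lemma central_bound (lam : ℝ) (hlam : 0 < lam) (s : ℕ) (hs : 1 ≤ s) :
    ∑' k : ℕ, Real.exp (-lam) * lam ^ k / (Nat.factorial k : ℝ) * ((k : ℝ) - lam) ^ (2 * s + 2)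
      ≤ 4 * (s : ℝ) * (lam + 2 * (s : ℝ)) *
        ∑' k : ℕ, Real.exp (-lam) * lam ^ k / (Nat.factorial k : ℝ)
          * ((k : ℝ) - lam) ^ (2 * s) := by
  have hEnn : ∀ k : ℕ, 0 ≤ Real.exp (-lam) * lam ^ k / (Nat.factorial k : ℝ) := by
    intro k; positivity
  have hbase : ∀ k : ℕ, (1 : ℝ) ≤ (k : ℝ) + lam + 1 := by
    intro k; have := Nat.cast_nonneg (α := ℝ) k; linarith
  have hx1 : ∀ k : ℕ, |(k : ℝ) - lam| ≤ (k : ℝ) + lam + 1 := by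
    intro k
    have h0 : (0 : ℝ) ≤ (k : ℝ) := Nat.cast_nonneg k
    rcases abs_cases ((k : ℝ) - lam) with ⟨h, _⟩ | ⟨h, _⟩ <;> rw [h] <;> linarith
  have hx2 : ∀ k : ℕ, |(k : ℝ) - lam + 1| ≤ (k : ℝ) + lam + 1 := by
    intro k
    have h0 : (0 : ℝ) ≤ (k : ℝ) := Nat.cast_nonneg k
    rcases abs_cases ((k : ℝ) - lam + 1) with ⟨h, _⟩ | ⟨h, _⟩ <;> rw [h] <;> linarith
  have habs : ∀ (m : ℕ), m ≤ 2 * s + 2 → ∀ (k : ℕ) (x : ℝ), |x| ≤ (k : ℝ) + lam + 1 →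
      |x ^ m| ≤ ((k : ℝ) + lam + 1) ^ (2 * s + 2) := by
    intro m hm k x hx
    rw [abs_pow]
    calc |x| ^ m ≤ ((k : ℝ) + lam + 1) ^ m := pow_le_pow_left₀ (abs_nonneg x) hx m
      _ ≤ ((k : ℝ) + lam + 1) ^ (2 * s + 2) := pow_le_pow_right₀ (hbase k) hm
  have hS2s : Summable (fun k : ℕ =>
      Real.exp (-lam) * lam ^ k / (Nat.factorial k : ℝ) * ((k : ℝ) - lam) ^ (2 * s)) :=
    summable_master lam hlam _ _ (fun k => habs _ (by omega) k _ (hx1 k))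
  have hS2s1 : Summable (fun k : ℕ =>
      Real.exp (-lam) * lam ^ k / (Nat.factorial k : ℝ) * ((k : ℝ) - lam) ^ (2 * s + 1)) :=
    summable_master lam hlam _ _ (fun k => habs _ (by omega) k _ (hx1 k))
  have hS2s2 : Summable (fun k : ℕ =>
      Real.exp (-lam) * lam ^ k / (Nat.factorial k : ℝ) * ((k : ℝ) - lam) ^ (2 * s + 2)) :=
    summable_master lam hlam _ _ (fun k => habs _ (by omega) k _ (hx1 k))
  have hT2s : Summable (fun k : ℕ =>
      Real.exp (-lam) * lam ^ k / (Nat.factorial k : ℝ) * ((k : ℝ) - lam + 1) ^ (2 * s)) :=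
    summable_master lam hlam _ _ (fun k => habs _ (by omega) k _ (hx2 k))
  have hT2s1 : Summable (fun k : ℕ =>
      Real.exp (-lam) * lam ^ k / (Nat.factorial k : ℝ) * ((k : ℝ) - lam + 1) ^ (2 * s + 1)) :=
    summable_master lam hlam _ _ (fun k => habs _ (by omega) k _ (hx2 k))
  have hKbound : ∀ (m : ℕ), m ≤ 2 * s + 1 → ∀ k : ℕ,
      |(k : ℝ) * ((k : ℝ) - lam) ^ m| ≤ ((k : ℝ) + lam + 1) ^ (2 * s + 2) := by
    intro m hm k
    rw [abs_mul, abs_pow, Nat.abs_cast]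
    have h0 : (0 : ℝ) ≤ (k : ℝ) := Nat.cast_nonneg k
    calc (k : ℝ) * |(k : ℝ) - lam| ^ m
        ≤ ((k : ℝ) + lam + 1) * (((k : ℝ) + lam + 1) ^ m) := by
          apply mul_le_mul (by linarith) (pow_le_pow_left₀ (abs_nonneg _) (hx1 k) m)
            (by positivity) (by positivity)
      _ = ((k : ℝ) + lam + 1) ^ (m + 1) := (pow_succ' _ _).symm
      _ ≤ ((k : ℝ) + lam + 1) ^ (2 * s + 2) := pow_le_pow_right₀ (hbase k) (by omega)
  have hK1 : Summable (fun k : ℕ => Real.exp (-lam) * lam ^ k / (Nat.factorial k : ℝ)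
      * ((k : ℝ) * ((k : ℝ) - lam) ^ (2 * s + 1))) :=
    summable_master lam hlam _ _ (fun k => hKbound _ (by omega) k)
  have stein1 : ∑' k : ℕ, Real.exp (-lam) * lam ^ k / (Nat.factorial k : ℝ)
      * ((k : ℝ) * ((k : ℝ) - lam) ^ (2 * s + 1))
      = lam * ∑' k : ℕ, Real.exp (-lam) * lam ^ k / (Nat.factorial k : ℝ)
          * ((k : ℝ) - lam + 1) ^ (2 * s + 1) := by
    have hg : Summable (fun k : ℕ => Real.exp (-lam) * lam ^ k / (Nat.factorial k : ℝ)
        * (((k + 1 : ℕ) : ℝ) - lam) ^ (2 * s + 1)) :=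
      hT2s1.congr (fun k => by push_cast; ring_nf)
    rw [stein lam hlam (fun k => ((k : ℝ) - lam) ^ (2 * s + 1)) hg]
    congr 1
    apply tsum_congr
    intro k
    push_cast
    ring_nf
  have stein2 : ∑' k : ℕ, Real.exp (-lam) * lam ^ k / (Nat.factorial k : ℝ)
      * ((k : ℝ) * ((k : ℝ) - lam) ^ (2 * s))
      = lam * ∑' k : ℕ, Real.exp (-lam) * lam ^ k / (Nat.factorial k : ℝ)
          * ((k : ℝ) - lam + 1) ^ (2 * s) := by
    have hg : Summable (fun k : ℕ => Real.exp (-lam) * lam ^ k / (Nat.factorial k : ℝ)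
        * (((k + 1 : ℕ) : ℝ) - lam) ^ (2 * s)) :=
      hT2s.congr (fun k => by push_cast; ring_nf)
    rw [stein lam hlam (fun k => ((k : ℝ) - lam) ^ (2 * s)) hg]
    congr 1
    apply tsum_congr
    intro k
    push_cast
    ring_nf
  exact abstract_bound lam hlam s hs _ hEnn hS2s hS2s1 hS2s2 hT2s hT2s1 hK1 stein1 stein2

/-- For `ξ ~ Poisson(lam)` and `ξ̃ = (ξ - lam)/√lam`:
`E[ξ̃^{2s} (ξ - lam)²] ≤ 4s(lam + 2s) E[ξ̃^{2s}]` for every integer `s ≥ 1`. -/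
theorem poisson_standardized_moment_bound (lam : ℝ) (hlam : 0 < lam) (s : ℕ) (hs : 1 ≤ s) :
    ∑' k : ℕ, (Real.exp (-lam) * lam ^ k / Nat.factorial k) *
        (((k : ℝ) - lam) / Real.sqrt lam) ^ (2 * s) * ((k : ℝ) - lam) ^ 2 ≤
      4 * (s : ℝ) * (lam + 2 * (s : ℝ)) *
        ∑' k : ℕ, (Real.exp (-lam) * lam ^ k / Nat.factorial k) *
          (((k : ℝ) - lam) / Real.sqrt lam) ^ (2 * s) := by
  have hls : (0 : ℝ) < lam ^ s := pow_pos hlam s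
  have hsq : (Real.sqrt lam) ^ (2 * s) = lam ^ s := by
    rw [pow_mul, Real.sq_sqrt hlam.le]
  have hL : ∀ k : ℕ, (Real.exp (-lam) * lam ^ k / Nat.factorial k) *
      (((k : ℝ) - lam) / Real.sqrt lam) ^ (2 * s) * ((k : ℝ) - lam) ^ 2
      = (Real.exp (-lam) * lam ^ k / (Nat.factorial k : ℝ) * ((k : ℝ) - lam) ^ (2 * s + 2))
          * (lam ^ s)⁻¹ := by
    intro k
    rw [div_pow, hsq, pow_add]
    field_simp
  have hR : ∀ k : ℕ, (Real.exp (-lam) * lam ^ k / Nat.factorial k) *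
      (((k : ℝ) - lam) / Real.sqrt lam) ^ (2 * s)
      = (Real.exp (-lam) * lam ^ k / (Nat.factorial k : ℝ) * ((k : ℝ) - lam) ^ (2 * s))
          * (lam ^ s)⁻¹ := by
    intro k
    rw [div_pow, hsq]
    field_simp
  rw [tsum_congr hL, tsum_congr hR, tsum_mul_right, tsum_mul_right]
  have h := central_bound lam hlam s hs
  calc (∑' k : ℕ, Real.exp (-lam) * lam ^ k / (Nat.factorial k : ℝ)
          * ((k : ℝ) - lam) ^ (2 * s + 2)) * (lam ^ s)⁻¹
      ≤ (4 * (s : ℝ) * (lam + 2 * (s : ℝ)) *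
          ∑' k : ℕ, Real.exp (-lam) * lam ^ k / (Nat.factorial k : ℝ)
            * ((k : ℝ) - lam) ^ (2 * s)) * (lam ^ s)⁻¹ := by
        apply mul_le_mul_of_nonneg_right h (by positivity)
    _ = 4 * (s : ℝ) * (lam + 2 * (s : ℝ)) *
          ((∑' k : ℕ, Real.exp (-lam) * lam ^ k / (Nat.factorial k : ℝ)
            * ((k : ℝ) - lam) ^ (2 * s)) * (lam ^ s)⁻¹) := by ring
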